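/- Let R be a commutative ring, F a formal group law over R with formal inverse ι, and H₁, H₂ ∈ R[[U,V]] the unique series of the associated 2-valued law. Write P = F(X,Y), P̂ = F(ι(X),ι(Y)), Q = F(ι(X),Y), Q̂ = F(X,ι(Y)) in R[[X,Y]]. Then the following identities hold in R[[X,Y,Z]][t]: (i) 1 + H₁(−P·ι(P), −Z·ι(Z))t + H₂(−P·ι(P), −Z·ι(Z))t² = (1 − F(P,Z)·F(P̂, ι(Z))·t)(1 − F(P̂, Z)·F(P, ι(Z))·t); and (ii) 1 + H₁(−Q·ι(Q), −Z·ι(Z))t + H₂(−Q·ι(Q), −Z·ι(Z))t² = (1 − F(Q,Z)·F(Q̂, ι(Z))·t)(1 − F(Q̂, Z)·F(Q, ι(Z))·t). (These exhibit the four formal roots of the formal ternary law W(F) obtained from F.) -/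

import Mathlib

noncomputable section

/-- The weight (total degree) of a multi-exponent. -/
def wt {τ : Type*} (d : τ →₀ ℕ) : ℕ := d.sum fun _ e => e

/-- Substitution of a family of multivariate power series (each having zero constant
coefficient) into a multivariate power series in finitely many variables.  The coefficient
of the result in multidegree `d` is computed from a sufficiently large truncation of `f`;
this agrees with the usual substitution whenever every `a i` has zero constant coefficient. -/
def msubst {R : Type*} [CommRing R] {k : ℕ} {τ : Type*}
    (a : Fin k → MvPowerSeries τ R) (f : MvPowerSeries (Fin k) R) : MvPowerSeries τ R :=
  fun d => MvPowerSeries.coeff (R := R) d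
    (MvPolynomial.eval₂ (MvPowerSeries.C (σ := τ) (R := R)) a
      (MvPowerSeries.trunc R (Finsupp.equivFunOnFinite.symm fun _ => wt d + 1) f))

/-- Substitution of a multivariate power series with zero constant coefficient into a
one-variable power series. -/
def psubst {R : Type*} [CommRing R] {τ : Type*}
    (a : MvPowerSeries τ R) (f : PowerSeries R) : MvPowerSeries τ R :=
  fun d => MvPowerSeries.coeff (R := R) d
    (Polynomial.eval₂ (MvPowerSeries.C (σ := τ) (R := R)) a (PowerSeries.trunc (wt d + 1) f))

/-- A (one-dimensional, commutative) formal group law over `R`: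
`F(X,0) = X`, `F(0,Y) = Y`, `F(X,Y) = F(Y,X)` and `F(F(X,Y),Z) = F(X,F(Y,Z))`. -/
structure IsFGL {R : Type*} [CommRing R] (F : MvPowerSeries (Fin 2) R) : Prop where
  zero_right : msubst ![MvPowerSeries.X 0, 0] F = (MvPowerSeries.X 0 : MvPowerSeries (Fin 2) R)
  zero_left : msubst ![0, MvPowerSeries.X 1] F = (MvPowerSeries.X 1 : MvPowerSeries (Fin 2) R)
  comm : msubst ![MvPowerSeries.X 1, MvPowerSeries.X 0] F = F
  assoc : msubst ![msubst ![(MvPowerSeries.X 0 : MvPowerSeries (Fin 3) R), MvPowerSeries.X 1] F,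
        MvPowerSeries.X 2] F
      = msubst ![(MvPowerSeries.X 0 : MvPowerSeries (Fin 3) R),
        msubst ![MvPowerSeries.X 1, MvPowerSeries.X 2] F] F

/-- `ι` is the formal inverse of the formal group law `F`: it is composable and
`F(X, ι(X)) = 0` in `R[[X]]`. -/
def IsFormalInverse {R : Type*} [CommRing R] (F : MvPowerSeries (Fin 2) R)
    (ι : PowerSeries R) : Prop :=
  PowerSeries.constantCoeff (R := R) ι = 0 ∧
    msubst ![(PowerSeries.X : PowerSeries R), ι] F = 0

end

/-- `ι(X)` viewed as a two-variable power series. -/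
noncomputable def iX {R : Type*} [CommRing R] (ι : PowerSeries R) : MvPowerSeries (Fin 2) R :=
  psubst (MvPowerSeries.X 0) ι

/-- `ι(Y)` viewed as a two-variable power series. -/
noncomputable def iY {R : Type*} [CommRing R] (ι : PowerSeries R) : MvPowerSeries (Fin 2) R :=
  psubst (MvPowerSeries.X 1) ι

/-- `ι` applied to the `j`-th variable, as a three-variable power series. -/
noncomputable def i3 {R : Type*} [CommRing R] (ι : PowerSeries R) (j : Fin 3) :
    MvPowerSeries (Fin 3) R :=
  psubst (MvPowerSeries.X j) ι

/-- `P = F(X,Y)` as a three-variable power series. -/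
noncomputable def P3 {R : Type*} [CommRing R] (F : MvPowerSeries (Fin 2) R) :
    MvPowerSeries (Fin 3) R :=
  msubst ![MvPowerSeries.X 0, MvPowerSeries.X 1] F

/-- `P̂ = F(ι(X),ι(Y))` as a three-variable power series. -/
noncomputable def Phat3 {R : Type*} [CommRing R] (F : MvPowerSeries (Fin 2) R)
    (ι : PowerSeries R) : MvPowerSeries (Fin 3) R :=
  msubst ![i3 ι 0, i3 ι 1] F

/-- `Q = F(ι(X),Y)` as a three-variable power series. -/
noncomputable def Q3 {R : Type*} [CommRing R] (F : MvPowerSeries (Fin 2) R)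
    (ι : PowerSeries R) : MvPowerSeries (Fin 3) R :=
  msubst ![i3 ι 0, MvPowerSeries.X 1] F

/-- `Q̂ = F(X,ι(Y))` as a three-variable power series. -/
noncomputable def Qhat3 {R : Type*} [CommRing R] (F : MvPowerSeries (Fin 2) R)
    (ι : PowerSeries R) : MvPowerSeries (Fin 3) R :=
  msubst ![MvPowerSeries.X 0, i3 ι 1] F

noncomputable section
namespace Aux


open MvPowerSeries
variable {R : Type*} [CommRing R] {τ : Type*} {k : ℕ}


open MvPowerSeries

variable {R : Type*} [CommRing R] {τ : Type*} {k : ℕ}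

theorem wt_eq_degree {d : τ →₀ ℕ} : wt d = Finsupp.degree d := rfl

theorem wt_add {u v : τ →₀ ℕ} : wt (u + v) = wt u + wt v := by
  simp only [wt_eq_degree, Finsupp.degree_eq_weight_one, map_add]

theorem le_wt (i : τ) (d : τ →₀ ℕ) : d i ≤ wt d := Finsupp.le_degree i d

theorem wt_eq_zero_iff {d : τ →₀ ℕ} : wt d = 0 ↔ d = 0 := Finsupp.degree_eq_zero_iff d

theorem one_le_order {a : MvPowerSeries τ R} (ha : constantCoeff (σ := τ) (R := R) a = 0) :
    1 ≤ a.order := by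
  apply nat_le_order (n := 1)
  intro d hd
  have : d = 0 := by
    rw [← Finsupp.degree_eq_zero_iff]
    omega
  simpa [this] using ha

theorem le_order_pow {a : MvPowerSeries τ R} (ha : constantCoeff (σ := τ) (R := R) a = 0) (n : ℕ) :
    (n : ℕ∞) ≤ (a ^ n).order := by
  induction n with
  | zero => simp
  | succ n ih =>
      have h1 := one_le_order ha
      calc ((n : ℕ∞) + 1) ≤ (a ^ n).order + a.order := add_le_add ih h1
        _ ≤ ((a ^ n) * a).order := le_order_mul
        _ = (a ^ (n+1)).order := by rw [pow_succ]

theorem le_order_prodpow {a : Fin k → MvPowerSeries τ R}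
    (ha : ∀ i, constantCoeff (σ := τ) (R := R) (a i) = 0) (m : Fin k →₀ ℕ) :
    (wt m : ℕ∞) ≤ (∏ i, a i ^ m i).order := by
  have : wt m = ∑ i, m i := Finsupp.sum_fintype _ _ (fun _ => rfl)
  rw [this]
  clear this
  induction (Finset.univ : Finset (Fin k)) using Finset.cons_induction with
  | empty => simp
  | cons j s hj ih =>
      rw [Finset.prod_cons, Finset.sum_cons]
      calc ((m j + ∑ i ∈ s, m i : ℕ) : ℕ∞) = (m j : ℕ∞) + (∑ i ∈ s, m i : ℕ) := by push_cast; ring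
        _ ≤ (a j ^ m j).order + (∏ i ∈ s, a i ^ m i).order :=
            add_le_add (le_order_pow (ha j) _) ih
        _ ≤ _ := le_order_mul

/-- Vanishing: coefficient of degree `d` of a product of series with zero constant term
vanishes when `wt d < wt m`. -/
theorem coeff_prodpow_eq_zero {a : Fin k → MvPowerSeries τ R}
    (ha : ∀ i, constantCoeff (σ := τ) (R := R) (a i) = 0) {m : Fin k →₀ ℕ} {d : τ →₀ ℕ}
    (h : wt d < wt m) :
    coeff (R := R) d (∏ i, a i ^ m i) = 0 := by
  apply coeff_of_lt_order
  calc ((Finsupp.degree d : ℕ) : ℕ∞) < (wt m : ℕ∞) := by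
        rw [← wt_eq_degree]; exact_mod_cast h
    _ ≤ _ := le_order_prodpow ha m

theorem coeff_pow_eq_zero {a : MvPowerSeries τ R}
    (ha : constantCoeff (σ := τ) (R := R) a = 0) {m : ℕ} {d : τ →₀ ℕ}
    (h : wt d < m) :
    coeff (R := R) d (a ^ m) = 0 := by
  apply coeff_of_lt_order
  calc ((Finsupp.degree d : ℕ) : ℕ∞) < (m : ℕ∞) := by rw [← wt_eq_degree]; exact_mod_cast h
    _ ≤ _ := le_order_pow ha m


/-- Coefficient of an `eval₂` of a polynomial whose small-weight coefficients vanish. -/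
theorem coeff_eval₂_eq_zero {a : Fin k → MvPowerSeries τ R}
    (ha : ∀ i, constantCoeff (σ := τ) (R := R) (a i) = 0) {d : τ →₀ ℕ} {q : MvPolynomial (Fin k) R}
    (hq : ∀ m, wt m ≤ wt d → q.coeff m = 0) :
    coeff (R := R) d (MvPolynomial.eval₂ (C (σ := τ) (R := R)) a q) = 0 := by
  rw [MvPolynomial.eval₂_eq, map_sum]
  apply Finset.sum_eq_zero
  intro m hm
  have hprod : (∏ i ∈ m.support, a i ^ m i) = ∏ i, a i ^ m i := by
    apply Finset.prod_subset (Finset.subset_univ _)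
    intro i _ hi
    simp [Finsupp.notMem_support_iff.mp hi]
  rw [hprod]
  by_cases h : wt m ≤ wt d
  · simp [hq m h]
  · rw [coeff_C_mul, coeff_prodpow_eq_zero ha (by omega)]
    ring

theorem coeff_msubst_def {a : Fin k → MvPowerSeries τ R}
    (f : MvPowerSeries (Fin k) R) (d : τ →₀ ℕ) :
    coeff (R := R) d (msubst a f) = coeff (R := R) d (MvPolynomial.eval₂ (C (σ := τ) (R := R)) a
      (trunc R (Finsupp.equivFunOnFinite.symm fun _ => wt d + 1) f)) := by
  rw [coeff_apply]
  rfl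

/-- The fundamental approximation lemma: `msubst` agrees with `eval₂` of any polynomial
approximating `f` in weights `≤ wt d`. -/
theorem coeff_msubst [NeZero k] {a : Fin k → MvPowerSeries τ R}
    (ha : ∀ i, constantCoeff (σ := τ) (R := R) (a i) = 0)
    (f : MvPowerSeries (Fin k) R) (d : τ →₀ ℕ) (p : MvPolynomial (Fin k) R)
    (hp : ∀ m, wt m ≤ wt d → p.coeff m = coeff (R := R) m f) :
    coeff (R := R) d (msubst a f) = coeff (R := R) d (MvPolynomial.eval₂ (C (σ := τ) (R := R)) a p) := by
  set n : Fin k →₀ ℕ := Finsupp.equivFunOnFinite.symm fun _ => wt d + 1 with hn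
  rw [coeff_msubst_def]
  have key : coeff (R := R) d (MvPolynomial.eval₂ (C (σ := τ) (R := R)) a (trunc R n f - p)) = 0 := by
    apply coeff_eval₂_eq_zero ha
    intro m hm
    have hmn : m < n := by
      have hle : m ≤ n := by
        intro i
        have := le_wt i m
        simp only [hn, Finsupp.coe_equivFunOnFinite_symm]
        omega
      refine lt_of_le_of_ne hle ?_
      intro h
      have : n (0 : Fin k) ≤ wt m := by rw [← h]; exact le_wt _ _
      simp only [hn, Finsupp.coe_equivFunOnFinite_symm] at this
      omega
    rw [MvPolynomial.coeff_sub, coeff_trunc, if_pos hmn, hp m hm]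
    ring
  have : MvPolynomial.eval₂ (C (σ := τ) (R := R)) a (trunc R n f - p)
      = MvPolynomial.eval₂ (C (σ := τ) (R := R)) a (trunc R n f) - MvPolynomial.eval₂ (C (σ := τ) (R := R)) a p := by
    simp only [← MvPolynomial.coe_eval₂Hom, map_sub]
  rw [this, map_sub, sub_eq_zero] at key
  exact key

/-- coefficient of a product only depends on small-weight coefficients of the factors. -/
theorem coeff_mul_congr {N : ℕ} {X X' Y Y' : MvPowerSeries τ R}
    (hX : ∀ e, wt e ≤ N → coeff (R := R) e X = coeff (R := R) e X')
    (hY : ∀ e, wt e ≤ N → coeff (R := R) e Y = coeff (R := R) e Y')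
    {d : τ →₀ ℕ} (hd : wt d ≤ N) :
    coeff (R := R) d (X * Y) = coeff (R := R) d (X' * Y') := by
  classical
  rw [coeff_mul, coeff_mul]
  apply Finset.sum_congr rfl
  intro p hp
  rw [Finset.HasAntidiagonal.mem_antidiagonal] at hp
  have h1 : wt p.1 + wt p.2 = wt d := by rw [← wt_add, hp]
  rw [hX p.1 (by omega), hY p.2 (by omega)]


theorem lt_lvl [NeZero k] {N : ℕ} {m : Fin k →₀ ℕ} (h : wt m ≤ N) :
    m < Finsupp.equivFunOnFinite.symm fun _ => N + 1 := by
  have hle : m ≤ Finsupp.equivFunOnFinite.symm fun _ => N + 1 := by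
    intro i
    have := le_wt i m
    simp only [Finsupp.coe_equivFunOnFinite_symm]
    omega
  refine lt_of_le_of_ne hle ?_
  intro hcontra
  have : (Finsupp.equivFunOnFinite.symm fun _ : Fin k => N + 1) (0 : Fin k) ≤ wt m := by
    rw [← hcontra]; exact le_wt _ _
  simp only [Finsupp.coe_equivFunOnFinite_symm] at this
  omega

theorem coeff_trunc_wt [NeZero k] {N : ℕ} {m : Fin k →₀ ℕ} (h : wt m ≤ N)
    (f : MvPowerSeries (Fin k) R) :
    (trunc R (Finsupp.equivFunOnFinite.symm fun _ => N + 1) f).coeff m = coeff (R := R) m f := by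
  rw [coeff_trunc, if_pos (lt_lvl h)]

theorem msubst_congr [NeZero k] {b : Fin k → MvPowerSeries τ R}
    (hb : ∀ i, constantCoeff (σ := τ) (R := R) (b i) = 0) {f g : MvPowerSeries (Fin k) R} (d : τ →₀ ℕ)
    (h : ∀ e, wt e ≤ wt d → coeff (R := R) e f = coeff (R := R) e g) :
    coeff (R := R) d (msubst b f) = coeff (R := R) d (msubst b g) := by
  set p := trunc R (Finsupp.equivFunOnFinite.symm fun _ => wt d + 1) f with hp
  rw [coeff_msubst hb f d p (fun m hm => coeff_trunc_wt hm f),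
    coeff_msubst hb g d p (fun m hm => by rw [hp, coeff_trunc_wt hm f, h m hm])]

theorem msubst_X [NeZero k] {a : Fin k → MvPowerSeries τ R}
    (ha : ∀ i, constantCoeff (σ := τ) (R := R) (a i) = 0) (i : Fin k) :
    msubst a (X i) = a i := by
  apply MvPowerSeries.ext; intro d
  rw [coeff_msubst ha (X i) d (MvPolynomial.X i) ?_, MvPolynomial.eval₂_X]
  intro m _
  rw [MvPolynomial.coeff_X', MvPowerSeries.coeff_X]
  simp [eq_comm]

theorem msubst_zero [NeZero k] {a : Fin k → MvPowerSeries τ R}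
    (ha : ∀ i, constantCoeff (σ := τ) (R := R) (a i) = 0) :
    msubst a (0 : MvPowerSeries (Fin k) R) = 0 := by
  apply MvPowerSeries.ext; intro d
  rw [coeff_msubst ha 0 d 0 (by simp), MvPolynomial.eval₂_zero]

theorem msubst_one [NeZero k] {a : Fin k → MvPowerSeries τ R}
    (ha : ∀ i, constantCoeff (σ := τ) (R := R) (a i) = 0) :
    msubst a (1 : MvPowerSeries (Fin k) R) = 1 := by
  apply MvPowerSeries.ext; intro d
  rw [coeff_msubst ha 1 d 1 ?_, MvPolynomial.eval₂_one]
  intro m _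
  rw [MvPolynomial.coeff_one, MvPowerSeries.coeff_one]
  simp [eq_comm]

theorem msubst_C [NeZero k] {a : Fin k → MvPowerSeries τ R}
    (ha : ∀ i, constantCoeff (σ := τ) (R := R) (a i) = 0) (r : R) :
    msubst a (C (σ := (Fin k)) (R := R) r) = C (σ := τ) (R := R) r := by
  apply MvPowerSeries.ext; intro d
  rw [coeff_msubst ha _ d (MvPolynomial.C r) ?_, MvPolynomial.eval₂_C]
  intro m _
  rw [MvPolynomial.coeff_C, MvPowerSeries.coeff_C]
  simp [eq_comm]

theorem msubst_add [NeZero k] {a : Fin k → MvPowerSeries τ R}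
    (ha : ∀ i, constantCoeff (σ := τ) (R := R) (a i) = 0) (f g : MvPowerSeries (Fin k) R) :
    msubst a (f + g) = msubst a f + msubst a g := by
  apply MvPowerSeries.ext; intro d
  set p := trunc R (Finsupp.equivFunOnFinite.symm fun _ => wt d + 1) f with hpdef
  set q := trunc R (Finsupp.equivFunOnFinite.symm fun _ => wt d + 1) g with hqdef
  have hp : ∀ m, wt m ≤ wt d → p.coeff m = coeff (R := R) m f := fun m hm => coeff_trunc_wt hm f
  have hq : ∀ m, wt m ≤ wt d → q.coeff m = coeff (R := R) m g := fun m hm => coeff_trunc_wt hm g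
  have h1 : coeff (R := R) d (msubst a (f + g))
      = coeff (R := R) d (MvPolynomial.eval₂ (C (σ := τ) (R := R)) a (p + q)) := by
    apply coeff_msubst ha
    intro m hm
    rw [MvPolynomial.coeff_add, map_add, hp m hm, hq m hm]
  rw [h1]
  have : MvPolynomial.eval₂ (C (σ := τ) (R := R)) a (p + q)
      = MvPolynomial.eval₂ (C (σ := τ) (R := R)) a p + MvPolynomial.eval₂ (C (σ := τ) (R := R)) a q := by
    simp only [← MvPolynomial.coe_eval₂Hom, map_add]
  rw [this, map_add, map_add, coeff_msubst ha f d p hp, coeff_msubst ha g d q hq]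

theorem msubst_mul [NeZero k] {a : Fin k → MvPowerSeries τ R}
    (ha : ∀ i, constantCoeff (σ := τ) (R := R) (a i) = 0) (f g : MvPowerSeries (Fin k) R) :
    msubst a (f * g) = msubst a f * msubst a g := by
  classical
  apply MvPowerSeries.ext; intro d
  set p := trunc R (Finsupp.equivFunOnFinite.symm fun _ => wt d + 1) f with hpdef
  set q := trunc R (Finsupp.equivFunOnFinite.symm fun _ => wt d + 1) g with hqdef
  have hp : ∀ m, wt m ≤ wt d → p.coeff m = coeff (R := R) m f := fun m hm => coeff_trunc_wt hm f
  have hq : ∀ m, wt m ≤ wt d → q.coeff m = coeff (R := R) m g := fun m hm => coeff_trunc_wt hm g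
  have h1 : coeff (R := R) d (msubst a (f * g))
      = coeff (R := R) d (MvPolynomial.eval₂ (C (σ := τ) (R := R)) a (p * q)) := by
    apply coeff_msubst ha
    intro m hm
    rw [MvPolynomial.coeff_mul, MvPowerSeries.coeff_mul]
    apply Finset.sum_congr rfl
    intro x hx
    rw [Finset.HasAntidiagonal.mem_antidiagonal] at hx
    have hwt : wt x.1 + wt x.2 = wt m := by rw [← wt_add, hx]
    rw [hp x.1 (by omega), hq x.2 (by omega)]
  rw [h1]
  have h2 : MvPolynomial.eval₂ (C (σ := τ) (R := R)) a (p * q)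
      = MvPolynomial.eval₂ (C (σ := τ) (R := R)) a p * MvPolynomial.eval₂ (C (σ := τ) (R := R)) a q := by
    simp only [← MvPolynomial.coe_eval₂Hom, map_mul]
  rw [h2]
  exact coeff_mul_congr
    (fun e he => (coeff_msubst ha f e p (fun m hm => hp m (le_trans hm he))).symm)
    (fun e he => (coeff_msubst ha g e q (fun m hm => hq m (le_trans hm he))).symm)
    le_rfl

/-- `msubst` as a ring homomorphism. -/
def msubstHom [NeZero k] {a : Fin k → MvPowerSeries τ R}
    (ha : ∀ i, constantCoeff (σ := τ) (R := R) (a i) = 0) :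
    MvPowerSeries (Fin k) R →+* MvPowerSeries τ R where
  toFun := msubst a
  map_one' := msubst_one ha
  map_mul' := msubst_mul ha
  map_zero' := msubst_zero ha
  map_add' := msubst_add ha

@[simp] theorem msubstHom_apply [NeZero k] {a : Fin k → MvPowerSeries τ R}
    (ha : ∀ i, constantCoeff (σ := τ) (R := R) (a i) = 0) (f : MvPowerSeries (Fin k) R) :
    msubstHom ha f = msubst a f := rfl

theorem msubst_neg [NeZero k] {a : Fin k → MvPowerSeries τ R}
    (ha : ∀ i, constantCoeff (σ := τ) (R := R) (a i) = 0) (f : MvPowerSeries (Fin k) R) :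
    msubst a (-f) = -msubst a f := by
  rw [← msubstHom_apply ha, map_neg, msubstHom_apply]

theorem constantCoeff_msubst [NeZero k] {a : Fin k → MvPowerSeries τ R}
    (ha : ∀ i, constantCoeff (σ := τ) (R := R) (a i) = 0) (f : MvPowerSeries (Fin k) R) :
    constantCoeff (σ := τ) (R := R) (msubst a f) = constantCoeff (σ := (Fin k)) (R := R) f := by
  have hp : ∀ m, wt m ≤ wt (0 : τ →₀ ℕ) →
      (MvPolynomial.C (constantCoeff (σ := (Fin k)) (R := R) f) : MvPolynomial (Fin k) R).coeff m
        = coeff (R := R) m f := by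
    intro m hm
    have hm0 : m = 0 := by
      rw [← wt_eq_zero_iff]
      simpa [wt, Finsupp.sum_zero_index] using hm
    subst hm0
    rw [MvPolynomial.coeff_C, if_pos rfl, coeff_zero_eq_constantCoeff]
  rw [← coeff_zero_eq_constantCoeff, coeff_msubst ha f 0 _ hp, MvPolynomial.eval₂_C,
    MvPowerSeries.coeff_zero_C]


theorem coeff_peval₂_eq_zero {u : MvPowerSeries τ R} (hu : constantCoeff (σ := τ) (R := R) u = 0)
    {d : τ →₀ ℕ} {q : Polynomial R} (hq : ∀ m, m ≤ wt d → q.coeff m = 0) :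
    coeff (R := R) d (Polynomial.eval₂ (C (σ := τ) (R := R)) u q) = 0 := by
  rw [Polynomial.eval₂_eq_sum, Polynomial.sum_def, map_sum]
  apply Finset.sum_eq_zero
  intro e _
  by_cases h : e ≤ wt d
  · simp [hq e h]
  · rw [coeff_C_mul, coeff_pow_eq_zero hu (by omega)]
    ring

theorem coeff_psubst_def (u : MvPowerSeries τ R) (f : PowerSeries R) (d : τ →₀ ℕ) :
    coeff (R := R) d (psubst u f)
      = coeff (R := R) d (Polynomial.eval₂ (C (σ := τ) (R := R)) u (PowerSeries.trunc (wt d + 1) f)) := by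
  rw [coeff_apply]
  rfl

theorem coeff_psubst {u : MvPowerSeries τ R} (hu : constantCoeff (σ := τ) (R := R) u = 0)
    (f : PowerSeries R) (d : τ →₀ ℕ) (p : Polynomial R)
    (hp : ∀ m, m ≤ wt d → p.coeff m = PowerSeries.coeff (R := R) m f) :
    coeff (R := R) d (psubst u f) = coeff (R := R) d (Polynomial.eval₂ (C (σ := τ) (R := R)) u p) := by
  rw [coeff_psubst_def]
  have key : coeff (R := R) d (Polynomial.eval₂ (C (σ := τ) (R := R)) u (PowerSeries.trunc (wt d + 1) f - p))
      = 0 := by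
    apply coeff_peval₂_eq_zero hu
    intro m hm
    rw [Polynomial.coeff_sub, PowerSeries.coeff_trunc, if_pos (by omega), hp m hm, sub_self]
  rw [Polynomial.eval₂_sub, map_sub, sub_eq_zero] at key
  exact key

theorem coeff_ptrunc_wt {N m : ℕ} (h : m ≤ N) (f : PowerSeries R) :
    (PowerSeries.trunc (N + 1) f).coeff m = PowerSeries.coeff (R := R) m f := by
  rw [PowerSeries.coeff_trunc, if_pos (by omega)]

theorem psubst_congr {u : MvPowerSeries τ R} (hu : constantCoeff (σ := τ) (R := R) u = 0)
    {f g : PowerSeries R} (d : τ →₀ ℕ)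
    (h : ∀ m, m ≤ wt d → PowerSeries.coeff (R := R) m f = PowerSeries.coeff (R := R) m g) :
    coeff (R := R) d (psubst u f) = coeff (R := R) d (psubst u g) := by
  set p := PowerSeries.trunc (wt d + 1) f with hpdef
  rw [coeff_psubst hu f d p (fun m hm => coeff_ptrunc_wt hm f),
    coeff_psubst hu g d p (fun m hm => by rw [hpdef, coeff_ptrunc_wt hm f, h m hm])]

theorem psubst_X {u : MvPowerSeries τ R} (hu : constantCoeff (σ := τ) (R := R) u = 0) :
    psubst u PowerSeries.X = u := by
  apply MvPowerSeries.ext; intro d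
  rw [coeff_psubst hu _ d Polynomial.X ?_, Polynomial.eval₂_X]
  intro m _
  rw [Polynomial.coeff_X, PowerSeries.coeff_X]
  simp [eq_comm]

theorem psubst_zero {u : MvPowerSeries τ R} (hu : constantCoeff (σ := τ) (R := R) u = 0) :
    psubst u (0 : PowerSeries R) = 0 := by
  apply MvPowerSeries.ext; intro d
  rw [coeff_psubst hu 0 d 0 (by simp), Polynomial.eval₂_zero]

theorem psubst_one {u : MvPowerSeries τ R} (hu : constantCoeff (σ := τ) (R := R) u = 0) :
    psubst u (1 : PowerSeries R) = 1 := by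
  apply MvPowerSeries.ext; intro d
  rw [coeff_psubst hu 1 d 1 ?_, Polynomial.eval₂_one]
  intro m _
  simp [Polynomial.coeff_one, PowerSeries.coeff_one, eq_comm]

theorem psubst_C {u : MvPowerSeries τ R} (hu : constantCoeff (σ := τ) (R := R) u = 0) (r : R) :
    psubst u (PowerSeries.C (R := R) r) = C (σ := τ) (R := R) r := by
  apply MvPowerSeries.ext; intro d
  rw [coeff_psubst hu _ d (Polynomial.C r) ?_, Polynomial.eval₂_C]
  intro m _
  rw [Polynomial.coeff_C, PowerSeries.coeff_C]

theorem psubst_add {u : MvPowerSeries τ R} (hu : constantCoeff (σ := τ) (R := R) u = 0)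
    (f g : PowerSeries R) : psubst u (f + g) = psubst u f + psubst u g := by
  apply MvPowerSeries.ext; intro d
  set p := PowerSeries.trunc (wt d + 1) f with hpdef
  set q := PowerSeries.trunc (wt d + 1) g with hqdef
  have hp : ∀ m, m ≤ wt d → p.coeff m = PowerSeries.coeff (R := R) m f :=
    fun m hm => coeff_ptrunc_wt hm f
  have hq : ∀ m, m ≤ wt d → q.coeff m = PowerSeries.coeff (R := R) m g :=
    fun m hm => coeff_ptrunc_wt hm g
  have h1 : coeff (R := R) d (psubst u (f + g))
      = coeff (R := R) d (Polynomial.eval₂ (C (σ := τ) (R := R)) u (p + q)) := by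
    apply coeff_psubst hu
    intro m hm
    rw [Polynomial.coeff_add, map_add, hp m hm, hq m hm]
  rw [h1, Polynomial.eval₂_add, map_add, map_add,
    coeff_psubst hu f d p hp, coeff_psubst hu g d q hq]

theorem psubst_mul {u : MvPowerSeries τ R} (hu : constantCoeff (σ := τ) (R := R) u = 0)
    (f g : PowerSeries R) : psubst u (f * g) = psubst u f * psubst u g := by
  classical
  apply MvPowerSeries.ext; intro d
  set p := PowerSeries.trunc (wt d + 1) f with hpdef
  set q := PowerSeries.trunc (wt d + 1) g with hqdef
  have hp : ∀ m, m ≤ wt d → p.coeff m = PowerSeries.coeff (R := R) m f :=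
    fun m hm => coeff_ptrunc_wt hm f
  have hq : ∀ m, m ≤ wt d → q.coeff m = PowerSeries.coeff (R := R) m g :=
    fun m hm => coeff_ptrunc_wt hm g
  have h1 : coeff (R := R) d (psubst u (f * g))
      = coeff (R := R) d (Polynomial.eval₂ (C (σ := τ) (R := R)) u (p * q)) := by
    apply coeff_psubst hu
    intro m hm
    rw [Polynomial.coeff_mul, PowerSeries.coeff_mul]
    apply Finset.sum_congr rfl
    intro x hx
    rw [Finset.HasAntidiagonal.mem_antidiagonal] at hx
    rw [hp x.1 (by omega), hq x.2 (by omega)]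
  rw [h1, Polynomial.eval₂_mul]
  exact coeff_mul_congr
    (fun e he => (coeff_psubst hu f e p (fun m hm => hp m (le_trans hm he))).symm)
    (fun e he => (coeff_psubst hu g e q (fun m hm => hq m (le_trans hm he))).symm)
    le_rfl

/-- `psubst` as a ring homomorphism. -/
def psubstHom {u : MvPowerSeries τ R} (hu : constantCoeff (σ := τ) (R := R) u = 0) :
    PowerSeries R →+* MvPowerSeries τ R where
  toFun := psubst u
  map_one' := psubst_one hu
  map_mul' := psubst_mul hu
  map_zero' := psubst_zero hu
  map_add' := psubst_add hu

@[simp] theorem psubstHom_apply {u : MvPowerSeries τ R} (hu : constantCoeff (σ := τ) (R := R) u = 0)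
    (f : PowerSeries R) : psubstHom hu f = psubst u f := rfl

theorem constantCoeff_psubst {u : MvPowerSeries τ R} (hu : constantCoeff (σ := τ) (R := R) u = 0)
    (f : PowerSeries R) :
    constantCoeff (σ := τ) (R := R) (psubst u f) = PowerSeries.constantCoeff (R := R) f := by
  have hp : ∀ m, m ≤ wt (0 : τ →₀ ℕ) →
      (Polynomial.C (PowerSeries.constantCoeff (R := R) f)).coeff m = PowerSeries.coeff (R := R) m f := by
    intro m hm
    have hw : wt (0 : τ →₀ ℕ) = 0 := by simp [wt]
    have hm0 : m = 0 := by omega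
    subst hm0
    rw [Polynomial.coeff_C, if_pos rfl, PowerSeries.coeff_zero_eq_constantCoeff]
  rw [← coeff_zero_eq_constantCoeff, coeff_psubst hu f 0 _ hp, Polynomial.eval₂_C,
    MvPowerSeries.coeff_zero_C]


theorem ps_coeff_eq (m : ℕ) (f : PowerSeries R) :
    PowerSeries.coeff (R := R) m f = MvPowerSeries.coeff (R := R) (Finsupp.single () m) f := by
  rw [PowerSeries.coeff_def]
  simp

theorem wt_single_unit (m : ℕ) : wt (Finsupp.single () m) = m := by
  simp [wt, Finsupp.sum_single_index]

theorem ps_constantCoeff_eq (f : PowerSeries R) :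
    PowerSeries.constantCoeff (R := R) f = MvPowerSeries.constantCoeff (σ := Unit) (R := R) f := rfl

/-- Composition of multivariate substitutions. -/
theorem msubst_msubst {l : ℕ} [NeZero k] [NeZero l] {a : Fin k → MvPowerSeries (Fin l) R}
    {b : Fin l → MvPowerSeries τ R}
    (ha : ∀ i, constantCoeff (σ := (Fin l)) (R := R) (a i) = 0)
    (hb : ∀ j, constantCoeff (σ := τ) (R := R) (b j) = 0) (f : MvPowerSeries (Fin k) R) :
    msubst b (msubst a f) = msubst (fun i => msubst b (a i)) f := by
  have hc : ∀ i, constantCoeff (σ := τ) (R := R) (msubst b (a i)) = 0 := fun i => by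
    rw [constantCoeff_msubst hb, ha i]
  apply MvPowerSeries.ext; intro d
  set p := trunc R (Finsupp.equivFunOnFinite.symm fun _ : Fin k => wt d + 1) f with hpdef
  have hp : ∀ m, wt m ≤ wt d → p.coeff m = coeff (R := R) m f := fun m hm => coeff_trunc_wt hm f
  have h1 : coeff (R := R) d (msubst b (msubst a f))
      = coeff (R := R) d (msubst b (MvPolynomial.eval₂ (C (σ := (Fin l)) (R := R)) a p)) := by
    apply msubst_congr hb d
    intro e he
    exact coeff_msubst ha f e p (fun m hm => hp m (le_trans hm he))
  have h2 : msubst b (MvPolynomial.eval₂ (C (σ := (Fin l)) (R := R)) a p)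
      = MvPolynomial.eval₂ (C (σ := τ) (R := R)) (fun i => msubst b (a i)) p := by
    have := MvPolynomial.eval₂_comp_left (msubstHom hb) (C (σ := (Fin l)) (R := R)) a p
    rw [msubstHom_apply] at this
    rw [this]
    congr 1
    · exact RingHom.ext fun r => msubst_C hb r
  rw [h1, h2, (coeff_msubst hc f d p hp).symm]

/-- Multivariate substitution applied to a `psubst`. -/
theorem msubst_psubst {l : ℕ} [NeZero l] {u : MvPowerSeries (Fin l) R}
    {b : Fin l → MvPowerSeries τ R}
    (hu : constantCoeff (σ := (Fin l)) (R := R) u = 0)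
    (hb : ∀ j, constantCoeff (σ := τ) (R := R) (b j) = 0) (f : PowerSeries R) :
    msubst b (psubst u f) = psubst (msubst b u) f := by
  have hc : constantCoeff (σ := τ) (R := R) (msubst b u) = 0 := by rw [constantCoeff_msubst hb, hu]
  apply MvPowerSeries.ext; intro d
  set p := PowerSeries.trunc (wt d + 1) f with hpdef
  have hp : ∀ m, m ≤ wt d → p.coeff m = PowerSeries.coeff (R := R) m f :=
    fun m hm => coeff_ptrunc_wt hm f
  have h1 : coeff (R := R) d (msubst b (psubst u f))
      = coeff (R := R) d (msubst b (Polynomial.eval₂ (C (σ := (Fin l)) (R := R)) u p)) := by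
    apply msubst_congr hb d
    intro e he
    exact coeff_psubst hu f e p (fun m hm => hp m (le_trans hm he))
  have h2 : msubst b (Polynomial.eval₂ (C (σ := (Fin l)) (R := R)) u p)
      = Polynomial.eval₂ (C (σ := τ) (R := R)) (msubst b u) p := by
    have := Polynomial.hom_eval₂ p (C (σ := (Fin l)) (R := R)) (msubstHom hb) u
    rw [msubstHom_apply] at this
    rw [this]
    congr 1
    exact RingHom.ext fun r => msubst_C hb r
  rw [h1, h2, (coeff_psubst hc f d p hp).symm]

/-- One-variable substitution applied to a multivariate substitution with values in
one-variable power series. -/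
theorem psubst_msubst [NeZero k] {w : MvPowerSeries τ R} {a : Fin k → PowerSeries R}
    (hw : constantCoeff (σ := τ) (R := R) w = 0)
    (ha : ∀ i, PowerSeries.constantCoeff (R := R) (a i) = 0) (f : MvPowerSeries (Fin k) R) :
    psubst w (msubst a f) = msubst (fun i => psubst w (a i)) f := by
  have ha' : ∀ i, constantCoeff (σ := Unit) (R := R) (a i) = 0 :=
    fun i => by rw [← ps_constantCoeff_eq, ha i]
  have hc : ∀ i, constantCoeff (σ := τ) (R := R) (psubst w (a i)) = 0 := fun i => by
    rw [constantCoeff_psubst hw, ha i]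
  apply MvPowerSeries.ext; intro d
  set p := trunc R (Finsupp.equivFunOnFinite.symm fun _ : Fin k => wt d + 1) f with hpdef
  have hp : ∀ m, wt m ≤ wt d → p.coeff m = coeff (R := R) m f := fun m hm => coeff_trunc_wt hm f
  have h1 : coeff (R := R) d (psubst w (msubst a f))
      = coeff (R := R) d (psubst w (MvPolynomial.eval₂ (C (σ := Unit) (R := R)) a p)) := by
    apply psubst_congr hw d
    intro m hm
    rw [ps_coeff_eq, ps_coeff_eq]
    exact coeff_msubst ha' f (Finsupp.single () m) p
      (fun e he => hp e (le_trans he (by rw [wt_single_unit]; exact hm)))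
  have h2 : psubst w (MvPolynomial.eval₂ (C (σ := Unit) (R := R)) a p)
      = MvPolynomial.eval₂ (C (σ := τ) (R := R)) (fun i => psubst w (a i)) p := by
    have := MvPolynomial.eval₂_comp_left (psubstHom hw) (C (σ := Unit) (R := R)) a p
    rw [psubstHom_apply] at this
    rw [this]
    congr 1
    · exact RingHom.ext fun r => psubst_C hw r
  rw [h1, h2, (coeff_msubst hc f d p hp).symm]


section FGL

variable {F : MvPowerSeries (Fin 2) R}

theorem sc2 {x y : MvPowerSeries τ R} (hx : constantCoeff (σ := τ) (R := R) x = 0)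
    (hy : constantCoeff (σ := τ) (R := R) y = 0) : ∀ i, constantCoeff (σ := τ) (R := R) (![x, y] i) = 0 := by
  intro i; fin_cases i <;> simpa

theorem sc3 {x y z : MvPowerSeries τ R} (hx : constantCoeff (σ := τ) (R := R) x = 0)
    (hy : constantCoeff (σ := τ) (R := R) y = 0) (hz : constantCoeff (σ := τ) (R := R) z = 0) :
    ∀ i, constantCoeff (σ := τ) (R := R) (![x, y, z] i) = 0 := by
  intro i; fin_cases i <;> simpa

theorem comp2 {α β : Type*} (g : α → β) (x y : α) :
    (fun i => g (![x, y] i)) = ![g x, g y] := by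
  funext i; fin_cases i <;> simp

theorem msubst2_X0 {u v : MvPowerSeries τ R} (hu : constantCoeff (σ := τ) (R := R) u = 0)
    (hv : constantCoeff (σ := τ) (R := R) v = 0) :
    msubst ![u, v] (X (0 : Fin 2)) = u := by
  rw [msubst_X (sc2 hu hv)]; simp

theorem msubst2_X1 {u v : MvPowerSeries τ R} (hu : constantCoeff (σ := τ) (R := R) u = 0)
    (hv : constantCoeff (σ := τ) (R := R) v = 0) :
    msubst ![u, v] (X (1 : Fin 2)) = v := by
  rw [msubst_X (sc2 hu hv)]; simp

theorem msubst3_X0 {u v w : MvPowerSeries τ R} (hu : constantCoeff (σ := τ) (R := R) u = 0)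
    (hv : constantCoeff (σ := τ) (R := R) v = 0) (hw : constantCoeff (σ := τ) (R := R) w = 0) :
    msubst ![u, v, w] (X (0 : Fin 3)) = u := by
  rw [msubst_X (sc3 hu hv hw)]; simp

theorem msubst3_X1 {u v w : MvPowerSeries τ R} (hu : constantCoeff (σ := τ) (R := R) u = 0)
    (hv : constantCoeff (σ := τ) (R := R) v = 0) (hw : constantCoeff (σ := τ) (R := R) w = 0) :
    msubst ![u, v, w] (X (1 : Fin 3)) = v := by
  rw [msubst_X (sc3 hu hv hw)]; simp

theorem msubst3_X2 {u v w : MvPowerSeries τ R} (hu : constantCoeff (σ := τ) (R := R) u = 0)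
    (hv : constantCoeff (σ := τ) (R := R) v = 0) (hw : constantCoeff (σ := τ) (R := R) w = 0) :
    msubst ![u, v, w] (X (2 : Fin 3)) = w := by
  rw [msubst_X (sc3 hu hv hw)]; simp

/-- Composing an outer substitution with a two-variable substitution. -/
theorem msubst2_comp {l : ℕ} [NeZero l] {x y : MvPowerSeries (Fin l) R}
    {b : Fin l → MvPowerSeries τ R}
    (hx : constantCoeff (σ := (Fin l)) (R := R) x = 0) (hy : constantCoeff (σ := (Fin l)) (R := R) y = 0)
    (hb : ∀ i, constantCoeff (σ := τ) (R := R) (b i) = 0) (f : MvPowerSeries (Fin 2) R) :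
    msubst b (msubst ![x, y] f) = msubst ![msubst b x, msubst b y] f := by
  rw [msubst_msubst (sc2 hx hy) hb, comp2]

theorem constF (hF : IsFGL F) : constantCoeff (σ := (Fin 2)) (R := R) F = 0 := by
  have h := congrArg (constantCoeff (σ := (Fin 2)) (R := R)) hF.zero_right
  rw [constantCoeff_msubst (sc2 (constantCoeff_X _) (map_zero _))] at h
  simpa using h

theorem const_add {u v : MvPowerSeries τ R} (hF : IsFGL F)
    (hu : constantCoeff (σ := τ) (R := R) u = 0) (hv : constantCoeff (σ := τ) (R := R) v = 0) :
    constantCoeff (σ := τ) (R := R) (msubst ![u, v] F) = 0 := by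
  rw [constantCoeff_msubst (sc2 hu hv), constF hF]

theorem const_inv {ι : PowerSeries R} (hι : IsFormalInverse F ι)
    {u : MvPowerSeries τ R} (hu : constantCoeff (σ := τ) (R := R) u = 0) :
    constantCoeff (σ := τ) (R := R) (psubst u ι) = 0 := by
  rw [constantCoeff_psubst hu, hι.1]

theorem add_zero' (hF : IsFGL F) {u : MvPowerSeries τ R}
    (hu : constantCoeff (σ := τ) (R := R) u = 0) : msubst ![u, 0] F = u := by
  have h := congrArg (msubst ![u, (0 : MvPowerSeries τ R)]) hF.zero_right
  rw [msubst2_comp (constantCoeff_X _) (map_zero _) (sc2 hu (map_zero _)),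
    msubst2_X0 hu (map_zero _), msubst_zero (sc2 hu (map_zero _))] at h
  exact h

theorem zero_add' (hF : IsFGL F) {v : MvPowerSeries τ R}
    (hv : constantCoeff (σ := τ) (R := R) v = 0) : msubst ![0, v] F = v := by
  have h := congrArg (msubst ![(0 : MvPowerSeries τ R), v]) hF.zero_left
  rw [msubst2_comp (map_zero _) (constantCoeff_X _) (sc2 (map_zero _) hv),
    msubst2_X1 (map_zero _) hv, msubst_zero (sc2 (map_zero _) hv)] at h
  exact h

theorem comm' (hF : IsFGL F) {u v : MvPowerSeries τ R}
    (hu : constantCoeff (σ := τ) (R := R) u = 0) (hv : constantCoeff (σ := τ) (R := R) v = 0) :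
    msubst ![u, v] F = msubst ![v, u] F := by
  have h := congrArg (msubst ![u, v]) hF.comm
  rw [msubst2_comp (constantCoeff_X _) (constantCoeff_X _) (sc2 hu hv),
    msubst2_X0 hu hv, msubst2_X1 hu hv] at h
  exact h.symm

theorem assoc' (hF : IsFGL F) {u v w : MvPowerSeries τ R}
    (hu : constantCoeff (σ := τ) (R := R) u = 0) (hv : constantCoeff (σ := τ) (R := R) v = 0)
    (hw : constantCoeff (σ := τ) (R := R) w = 0) :
    msubst ![msubst ![u, v] F, w] F = msubst ![u, msubst ![v, w] F] F := by
  have hb := sc3 hu hv hw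
  have hX0 : constantCoeff (σ := (Fin 3)) (R := R) (X (0 : Fin 3)) = 0 := constantCoeff_X _
  have hX1 : constantCoeff (σ := (Fin 3)) (R := R) (X (1 : Fin 3)) = 0 := constantCoeff_X _
  have hX2 : constantCoeff (σ := (Fin 3)) (R := R) (X (2 : Fin 3)) = 0 := constantCoeff_X _
  have h := congrArg (msubst ![u, v, w]) hF.assoc
  rw [msubst2_comp (const_add hF hX0 hX1) hX2 hb,
    msubst2_comp hX0 (const_add hF hX1 hX2) hb,
    msubst2_comp hX0 hX1 hb, msubst2_comp hX1 hX2 hb,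
    msubst3_X0 hu hv hw, msubst3_X1 hu hv hw, msubst3_X2 hu hv hw] at h
  exact h

theorem inv' {ι : PowerSeries R} (hι : IsFormalInverse F ι) {u : MvPowerSeries τ R}
    (hu : constantCoeff (σ := τ) (R := R) u = 0) :
    msubst ![u, psubst u ι] F = 0 := by
  have h := congrArg (psubst u) hι.2
  rw [psubst_msubst hu (fun i => by
        fin_cases i
        · simpa using PowerSeries.constantCoeff_X (R := R)
        · simpa using hι.1), psubst_zero hu] at h
  rw [comp2 (psubst u) PowerSeries.X ι, psubst_X hu] at h
  exact h

theorem cancel' (hF : IsFGL F) {u v w : MvPowerSeries τ R}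
    (hu : constantCoeff (σ := τ) (R := R) u = 0) (hv : constantCoeff (σ := τ) (R := R) v = 0)
    (hw : constantCoeff (σ := τ) (R := R) w = 0)
    (h1 : msubst ![u, v] F = 0) (h2 : msubst ![u, w] F = 0) : v = w := by
  calc v = msubst ![v, 0] F := (add_zero' hF hv).symm
    _ = msubst ![v, msubst ![u, w] F] F := by rw [h2]
    _ = msubst ![msubst ![v, u] F, w] F := (assoc' hF hv hu hw).symm
    _ = msubst ![msubst ![u, v] F, w] F := by rw [comm' hF hv hu]
    _ = msubst ![0, w] F := by rw [h1]
    _ = w := zero_add' hF hw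

/-- The key identity: the formal inverse of a formal sum is the formal sum of
"any inverses". -/
theorem psubst_inv_add (hF : IsFGL F) {ι : PowerSeries R} (hι : IsFormalInverse F ι)
    {u u' v v' : MvPowerSeries τ R}
    (hu : constantCoeff (σ := τ) (R := R) u = 0) (hu' : constantCoeff (σ := τ) (R := R) u' = 0)
    (hv : constantCoeff (σ := τ) (R := R) v = 0) (hv' : constantCoeff (σ := τ) (R := R) v' = 0)
    (h1 : msubst ![u, u'] F = 0) (h2 : msubst ![v, v'] F = 0) :
    psubst (msubst ![u, v] F) ι = msubst ![u', v'] F := by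
  have huv : constantCoeff (σ := τ) (R := R) (msubst ![u, v] F) = 0 := const_add hF hu hv
  apply cancel' hF huv (const_inv hι huv) (const_add hF hu' hv')
    (inv' hι huv)
  have inner : msubst ![v, msubst ![u', v'] F] F = u' := by
    calc msubst ![v, msubst ![u', v'] F] F
        = msubst ![v, msubst ![v', u'] F] F := by rw [comm' hF hu' hv']
      _ = msubst ![msubst ![v, v'] F, u'] F := (assoc' hF hv hv' hu').symm
      _ = msubst ![0, u'] F := by rw [h2]
      _ = u' := zero_add' hF hu'
  calc msubst ![msubst ![u, v] F, msubst ![u', v'] F] F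
      = msubst ![u, msubst ![v, msubst ![u', v'] F] F] F :=
        assoc' hF hu hv (const_add hF hu' hv')
    _ = msubst ![u, u'] F := by rw [inner]
    _ = 0 := h1

end FGL

end Aux
end

/-- formal roots of the formal ternary law `W(F)`: the two displayed
factorizations of `1 + H₁(−P·ι(P), −Z·ι(Z))t + H₂(−P·ι(P), −Z·ι(Z))t²` and of
`1 + H₁(−Q·ι(Q), −Z·ι(Z))t + H₂(−Q·ι(Q), −Z·ι(Z))t²` hold in `R[[X,Y,Z]][t]`. -/
theorem stmt_17 {R : Type*} [CommRing R] (F : MvPowerSeries (Fin 2) R) (hF : IsFGL F)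
    (ι : PowerSeries R) (hι : IsFormalInverse F ι)
    (H₁ H₂ : MvPowerSeries (Fin 2) R)
    (hH₁ : msubst ![-(MvPowerSeries.X 0 * iX ι), -(MvPowerSeries.X 1 * iY ι)] H₁
        = -(F * msubst ![iX ι, iY ι] F
            + msubst ![iX ι, MvPowerSeries.X 1] F * msubst ![MvPowerSeries.X 0, iY ι] F))
    (hH₂ : msubst ![-(MvPowerSeries.X 0 * iX ι), -(MvPowerSeries.X 1 * iY ι)] H₂
        = F * msubst ![iX ι, iY ι] F
            * (msubst ![iX ι, MvPowerSeries.X 1] F * msubst ![MvPowerSeries.X 0, iY ι] F)) :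
    (1 + Polynomial.C (msubst ![-(P3 F * psubst (P3 F) ι),
          -(MvPowerSeries.X 2 * i3 ι 2)] H₁) * Polynomial.X
        + Polynomial.C (msubst ![-(P3 F * psubst (P3 F) ι),
          -(MvPowerSeries.X 2 * i3 ι 2)] H₂) * Polynomial.X ^ 2
      = (1 - Polynomial.C (msubst ![P3 F, MvPowerSeries.X 2] F
            * msubst ![Phat3 F ι, i3 ι 2] F) * Polynomial.X)
        * (1 - Polynomial.C (msubst ![Phat3 F ι, MvPowerSeries.X 2] F
            * msubst ![P3 F, i3 ι 2] F) * Polynomial.X)) ∧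
    (1 + Polynomial.C (msubst ![-(Q3 F ι * psubst (Q3 F ι) ι),
          -(MvPowerSeries.X 2 * i3 ι 2)] H₁) * Polynomial.X
        + Polynomial.C (msubst ![-(Q3 F ι * psubst (Q3 F ι) ι),
          -(MvPowerSeries.X 2 * i3 ι 2)] H₂) * Polynomial.X ^ 2
      = (1 - Polynomial.C (msubst ![Q3 F ι, MvPowerSeries.X 2] F
            * msubst ![Qhat3 F ι, i3 ι 2] F) * Polynomial.X)
        * (1 - Polynomial.C (msubst ![Qhat3 F ι, MvPowerSeries.X 2] F
            * msubst ![Q3 F ι, i3 ι 2] F) * Polynomial.X)) := by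
  classical
  open MvPowerSeries Aux in
  -- basic constant-coefficient facts
  have hX0 : constantCoeff (σ := (Fin 3)) (R := R) (X (0 : Fin 3)) = 0 := constantCoeff_X _
  have hX1 : constantCoeff (σ := (Fin 3)) (R := R) (X (1 : Fin 3)) = 0 := constantCoeff_X _
  have hX2 : constantCoeff (σ := (Fin 3)) (R := R) (X (2 : Fin 3)) = 0 := constantCoeff_X _
  have hX0' : constantCoeff (σ := (Fin 2)) (R := R) (X (0 : Fin 2)) = 0 := constantCoeff_X _
  have hX1' : constantCoeff (σ := (Fin 2)) (R := R) (X (1 : Fin 2)) = 0 := constantCoeff_X _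
  have hi30 : constantCoeff (σ := (Fin 3)) (R := R) (i3 ι 0) = 0 := const_inv hι hX0
  have hi31 : constantCoeff (σ := (Fin 3)) (R := R) (i3 ι 1) = 0 := const_inv hι hX1
  have hi32 : constantCoeff (σ := (Fin 3)) (R := R) (i3 ι 2) = 0 := const_inv hι hX2
  have hP : constantCoeff (σ := (Fin 3)) (R := R) (P3 F) = 0 := const_add hF hX0 hX1
  have hPhat : constantCoeff (σ := (Fin 3)) (R := R) (Phat3 F ι) = 0 := const_add hF hi30 hi31
  have hQ : constantCoeff (σ := (Fin 3)) (R := R) (Q3 F ι) = 0 := const_add hF hi30 hX1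
  have hQhat : constantCoeff (σ := (Fin 3)) (R := R) (Qhat3 F ι) = 0 := const_add hF hX0 hi31
  have hiXc : constantCoeff (σ := (Fin 2)) (R := R) (iX ι) = 0 := const_inv hι hX0'
  have hiYc : constantCoeff (σ := (Fin 2)) (R := R) (iY ι) = 0 := const_inv hι hX1'
  -- the inverse identities: ι(P) = P̂  and  ι(Q) = Q̂
  have hiP : psubst (P3 F) ι = Phat3 F ι := by
    have := psubst_inv_add hF hι hX0 hi30 hX1 hi31 (inv' hι hX0) (inv' hι hX1)
    exact this
  have hiQ : psubst (Q3 F ι) ι = Qhat3 F ι := by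
    have h1 : msubst ![i3 ι 0, X (0 : Fin 3)] F = 0 := by
      rw [comm' hF hi30 hX0]; exact inv' hι hX0
    have := psubst_inv_add hF hι hi30 hX0 hX1 hi31 h1 (inv' hι hX1)
    exact this
  rw [hiP, hiQ]
  have key : ∀ (u : MvPowerSeries (Fin 3) R), constantCoeff (σ := (Fin 3)) (R := R) u = 0 →
      ∀ (uhat : MvPowerSeries (Fin 3) R), psubst u ι = uhat →
      (msubst ![-(u * uhat), -(X (2 : Fin 3) * i3 ι 2)] H₁
        = -(msubst ![u, X (2 : Fin 3)] F * msubst ![uhat, i3 ι 2] F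
            + msubst ![uhat, X (2 : Fin 3)] F * msubst ![u, i3 ι 2] F))
      ∧ (msubst ![-(u * uhat), -(X (2 : Fin 3) * i3 ι 2)] H₂
        = msubst ![u, X (2 : Fin 3)] F * msubst ![uhat, i3 ι 2] F
            * (msubst ![uhat, X (2 : Fin 3)] F * msubst ![u, i3 ι 2] F)) := by
    intro u hu uhat huhat
    have huhatc : constantCoeff (σ := (Fin 3)) (R := R) uhat = 0 := by
      rw [← huhat]; exact const_inv hι hu
    set b : Fin 2 → MvPowerSeries (Fin 3) R := ![u, X (2 : Fin 3)] with hbdef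
    have hb : ∀ i, constantCoeff (σ := (Fin 3)) (R := R) (b i) = 0 := sc2 hu hX2
    have hxA : constantCoeff (σ := (Fin 2)) (R := R) (-(X (0 : Fin 2) * iX ι)) = 0 := by
      rw [map_neg, map_mul, hX0', zero_mul, neg_zero]
    have hyA : constantCoeff (σ := (Fin 2)) (R := R) (-(X (1 : Fin 2) * iY ι)) = 0 := by
      rw [map_neg, map_mul, hX1', zero_mul, neg_zero]
    have sP0 : msubst b (X (0 : Fin 2)) = u := msubst2_X0 hu hX2
    have sP1 : msubst b (X (1 : Fin 2)) = X (2 : Fin 3) := msubst2_X1 hu hX2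
    have siX : msubst b (iX ι) = uhat := by
      show msubst b (psubst (X (0 : Fin 2)) ι) = uhat
      rw [msubst_psubst hX0' hb, sP0, huhat]
    have siY : msubst b (iY ι) = i3 ι 2 := by
      show msubst b (psubst (X (1 : Fin 2)) ι) = i3 ι 2
      rw [msubst_psubst hX1' hb, sP1]
      rfl
    have sxA : msubst b (-(X (0 : Fin 2) * iX ι)) = -(u * uhat) := by
      rw [msubst_neg hb, msubst_mul hb, sP0, siX]
    have syA : msubst b (-(X (1 : Fin 2) * iY ι)) = -(X (2 : Fin 3) * i3 ι 2) := by
      rw [msubst_neg hb, msubst_mul hb, sP1, siY]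
    have sFF : msubst b (msubst ![iX ι, iY ι] F) = msubst ![uhat, i3 ι 2] F := by
      rw [msubst2_comp hiXc hiYc hb, siX, siY]
    have sFG : msubst b (msubst ![iX ι, X (1 : Fin 2)] F)
        = msubst ![uhat, X (2 : Fin 3)] F := by
      rw [msubst2_comp hiXc hX1' hb, siX, sP1]
    have sFH : msubst b (msubst ![X (0 : Fin 2), iY ι] F)
        = msubst ![u, i3 ι 2] F := by
      rw [msubst2_comp hX0' hiYc hb, sP0, siY]
    constructor
    · have h := congrArg (msubst b) hH₁
      rw [msubst2_comp hxA hyA hb, sxA, syA] at h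
      rw [msubst_neg hb, msubst_add hb, msubst_mul hb, msubst_mul hb, sFF, sFG, sFH] at h
      exact h
    · have h := congrArg (msubst b) hH₂
      rw [msubst2_comp hxA hyA hb, sxA, syA] at h
      rw [msubst_mul hb, msubst_mul hb, msubst_mul hb, sFF, sFG, sFH] at h
      exact h
  constructor
  · obtain ⟨e1, e2⟩ := key (P3 F) hP (Phat3 F ι) hiP
    rw [e1, e2]
    simp only [map_neg, map_add, map_mul]
    ring
  · obtain ⟨e1, e2⟩ := key (Q3 F ι) hQ (Qhat3 F ι) hiQ
    rw [e1, e2]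
    simp only [map_neg, map_add, map_mul]
    ring
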